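/- For the linear decay schedule η_t = η(1 - t/T), the continuous last-iterate SGD loss bound evaluates to L_* + D²/(ηT) + (ηG²/3)(3 + 2 ln T/T - 2/T), which is at most L_* + D²/(ηT) + ηG²·(1 + o(1)) as T → ∞; in particular the bound is L_* + D²/(ηT) + ηG²(1 + ε) for T large enough. -/

import Mathlib

open Filter

/-- For the linear decay schedule `η_t = η(1 - t/T)`, the continuous last-iterate SGD loss bound
(with tail integrals `A(k) = η(T-k)²/(2T)`, `B(k) = η²(T-k)³/(3T²)` and the adjacent-index
penalty integrand `η_k B(k-1)/(A(k)A(k-1))`) evaluates to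
`L_* + D²/(ηT) + (ηG²/3)(3 + 2 ln T/T - 2/T)`; in particular, for every `ε > 0` this bound is
at most `L_* + D²/(ηT) + ηG²(1 + ε)` for all sufficiently large `T`. -/
theorem stmt_9 (η D G Lstar : ℝ) (hη : 0 < η) (hD : 0 < D) (hG : 0 < G)
    (A B : ℝ → ℝ → ℝ)
    (hA : ∀ T k, A T k = η * (T - k) ^ 2 / (2 * T))
    (hB : ∀ T k, B T k = η ^ 2 * (T - k) ^ 3 / (3 * T ^ 2))
    (bound : ℝ → ℝ)
    (hbound : ∀ T, bound T =
      Lstar + D ^ 2 / (2 * A T 0) + G ^ 2 * B T 0 / (2 * A T 0) +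
        G ^ 2 / 2 *
          ∫ k in (0:ℝ)..(T - 1), η * (1 - k / T) * B T (k - 1) / (A T k * A T (k - 1))) :
    (∀ T : ℝ, 1 < T →
      bound T = Lstar + D ^ 2 / (η * T) +
        η * G ^ 2 / 3 * (3 + 2 * Real.log T / T - 2 / T)) ∧
    ∀ ε : ℝ, 0 < ε → ∀ᶠ T in atTop,
      bound T ≤ Lstar + D ^ 2 / (η * T) + η * G ^ 2 * (1 + ε) := by
  have main : ∀ T : ℝ, 1 < T →
      bound T = Lstar + D ^ 2 / (η * T) +
        η * G ^ 2 / 3 * (3 + 2 * Real.log T / T - 2 / T) := by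
    intro T hT
    have hT0 : (0:ℝ) < T := lt_trans one_pos hT
    have hTne : T ≠ 0 := ne_of_gt hT0
    have hηne : η ≠ 0 := ne_of_gt hη
    -- rewrite the integrand
    have hcongr : ∫ k in (0:ℝ)..(T - 1),
        η * (1 - k / T) * B T (k - 1) / (A T k * A T (k - 1)) =
        ∫ k in (0:ℝ)..(T - 1), (4 * η / (3 * T) + 4 * η / (3 * T) * (T - k)⁻¹) := by
      apply intervalIntegral.integral_congr
      intro k hk
      rw [Set.uIcc_of_le (by linarith : (0:ℝ) ≤ T - 1)] at hk
      obtain ⟨hk0, hk1⟩ := hk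
      have h1 : (1:ℝ) ≤ T - k := by linarith
      have h2 : T - k ≠ 0 := by linarith
      have h3 : T - (k - 1) ≠ 0 := by linarith
      simp only [hA, hB]
      field_simp
      ring
    have hint1 : IntervalIntegrable (fun k : ℝ => 4 * η / (3 * T)) MeasureTheory.volume 0 (T - 1) :=
      intervalIntegrable_const
    have hint2 : IntervalIntegrable (fun k : ℝ => 4 * η / (3 * T) * (T - k)⁻¹)
        MeasureTheory.volume 0 (T - 1) := by
      apply ContinuousOn.intervalIntegrable
      apply ContinuousOn.mul continuousOn_const
      apply ContinuousOn.inv₀ (by fun_prop)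
      intro k hk
      rw [Set.uIcc_of_le (by linarith : (0:ℝ) ≤ T - 1)] at hk
      have := hk.2
      intro h; linarith [hk.1, hk.2]
    have hlog : ∫ k in (0:ℝ)..(T - 1), (T - k)⁻¹ = Real.log T := by
      have : ∀ k ∈ Set.uIcc (0:ℝ) (T - 1),
          HasDerivAt (fun x => -Real.log (T - x)) ((T - k)⁻¹) k := by
        intro k hk
        rw [Set.uIcc_of_le (by linarith : (0:ℝ) ≤ T - 1)] at hk
        have h2 : T - k ≠ 0 := by have := hk.2; intro h; linarith [hk.1]
        have hd : HasDerivAt (fun x : ℝ => T - x) (-1) k := by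
          simpa using (hasDerivAt_id k).const_sub T
        have := (hd.log h2).neg
        exact this.congr_deriv (by ring)
      have hInt : IntervalIntegrable (fun k : ℝ => (T - k)⁻¹) MeasureTheory.volume 0 (T - 1) := by
        apply ContinuousOn.intervalIntegrable
        apply ContinuousOn.inv₀ (by fun_prop)
        intro k hk
        rw [Set.uIcc_of_le (by linarith : (0:ℝ) ≤ T - 1)] at hk
        intro h; linarith [hk.1, hk.2]
      rw [intervalIntegral.integral_eq_sub_of_hasDerivAt this hInt]
      simp [sub_sub_cancel]
    have hval : ∫ k in (0:ℝ)..(T - 1),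
        η * (1 - k / T) * B T (k - 1) / (A T k * A T (k - 1)) =
        4 * η / (3 * T) * ((T - 1) + Real.log T) := by
      rw [hcongr, intervalIntegral.integral_add hint1 hint2,
        intervalIntegral.integral_const, intervalIntegral.integral_const_mul, hlog]
      simp
      ring
    rw [hbound, hval, hA, hB]
    have hA0 : η * (T - 0) ^ 2 / (2 * T) ≠ 0 := by
      simp only [sub_zero]
      positivity
    field_simp
    ring
  refine ⟨main, ?_⟩
  intro ε hε
  have h1 : ∀ᶠ T : ℝ in atTop, Real.log T / T ≤ 3 * ε / 2 := by
    have h := Real.isLittleO_log_id_atTop.tendsto_div_nhds_zero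
    exact h.eventually_le_const (by positivity : (0:ℝ) < 3 * ε / 2)
  filter_upwards [h1, eventually_gt_atTop (1:ℝ)] with T hlog hT
  rw [main T hT]
  have hT0 : (0:ℝ) < T := lt_trans one_pos hT
  have : η * G ^ 2 / 3 * (3 + 2 * Real.log T / T - 2 / T) ≤ η * G ^ 2 * (1 + ε) := by
    have h2 : (0:ℝ) < 2 / T := by positivity
    have h3 : 2 * Real.log T / T ≤ 3 * ε := by
      have : 2 * Real.log T / T = 2 * (Real.log T / T) := by ring
      rw [this]; linarith
    have hGq : (0:ℝ) < η * G ^ 2 := by positivity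
    nlinarith [hGq, h2, h3]
  linarith
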